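/- arXiv:0806.0041 — 3 statements merged into one kernel-verified Lean document; each statement's English description precedes it below -/
import Mathlib

section
/- Let ρ, σ : A → B be parallel ring homomorphisms and let R = Hom(ρ,ρ) and S = Hom(σ,σ) be the intertwiner endomorphism rings (subrings of B). If ρ ≤ σ and σ ≤ ρ, then R and S are Morita equivalent rings. -/
open CategoryTheory

/-- `t` is an intertwiner from the ring homomorphism `α` to the ring homomorphism `β`. -/
def IsIntertwiner {A B : Type*} [Ring A] [Ring B] (α β : A →+* B) (t : B) : Prop :=
  ∀ a : A, t * α a = β a * t

/-- `ρ ≤ σ` for parallel ring homomorphisms: there is a direct summand diagram. -/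
def RingHomLE {A B : Type*} [Ring A] [Ring B] (ρ σ : A →+* B) : Prop :=
  ∃ (n : ℕ) (b a : Fin n → B),
    (∀ i, IsIntertwiner ρ σ (b i)) ∧ (∀ i, IsIntertwiner σ ρ (a i)) ∧
    (∑ i, a i * b i) = 1

/-- The intertwiner endomorphism ring `Hom(σ,σ)` as a subring of `B`. -/
def EndSubring {A B : Type*} [Ring A] [Ring B] (σ : A →+* B) : Subring B where
  carrier := {t | IsIntertwiner σ σ t}
  mul_mem' := by
    intro x y hx hy a
    rw [mul_assoc, hy a, ← mul_assoc, hx a, mul_assoc]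
  one_mem' := by intro a; rw [one_mul, mul_one]
  add_mem' := by
    intro x y hx hy a
    simp only [add_mul, mul_add, hx a, hy a]
  zero_mem' := by intro a; simp
  neg_mem' := by
    intro x hx a
    simp only [neg_mul, mul_neg, hx a]

universe u v

namespace Stmt6Proof

variable {B : Type u} [Ring B]



section Core
variable (R S : Subring B) {p : ℕ} (u v : Fin p → B)
variable (hmem : ∀ (s : S) (j k : Fin p), u j * (s : B) * v k ∈ R)
variable (hsum : ∑ k, v k * u k = 1)

def coef (s : S) (j k : Fin p) : R := ⟨u j * (s : B) * v k, hmem s j k⟩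

include hsum in
lemma coef_key (s t : S) (j l : Fin p) :
    ∑ k, coef R S u v hmem s j k * coef R S u v hmem t k l =
      coef R S u v hmem (s * t) j l := by
  apply Subtype.ext
  push_cast [coef]
  calc ∑ k, (u j * (s : B) * v k) * (u k * (t : B) * v l)
      = ∑ k, u j * (s : B) * ((v k * u k) * ((t : B) * v l)) := by
        simp only [mul_assoc]
    _ = u j * (s : B) * ((∑ k, v k * u k) * ((t : B) * v l)) := by
        rw [← Finset.mul_sum, Finset.sum_mul]
    _ = u j * ((s : B) * (t : B)) * v l := by rw [hsum]; simp [mul_assoc]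

lemma coef_add (s t : S) (j k : Fin p) :
    coef R S u v hmem (s + t) j k = coef R S u v hmem s j k + coef R S u v hmem t j k := by
  apply Subtype.ext; push_cast [coef]; simp [mul_add, add_mul]

lemma coef_zero (j k : Fin p) : coef R S u v hmem 0 j k = 0 := by
  apply Subtype.ext; push_cast [coef]; simp

variable (X : Type u) [AddCommGroup X] [Module R X]

/-- The subgroup of `X^p` of vectors fixed by the idempotent matrix of coefficients. -/
def morSubgroup : AddSubgroup (Fin p → X) where
  carrier := {w | ∀ j, w j = ∑ k, coef R S u v hmem 1 j k • w k}
  add_mem' := by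
    intro x y hx hy j
    simp only [Pi.add_apply, smul_add, Finset.sum_add_distrib]
    rw [← hx j, ← hy j]
  zero_mem' := by intro j; simp
  neg_mem' := by
    intro x hx j
    simp only [Pi.neg_apply, smul_neg]
    rw [hx j]
    exact (Finset.sum_neg_distrib _).symm

/-- The carrier of the image module. -/
def Mor (_ : ∑ k, v k * u k = 1) : Type u := {w : Fin p → X // w ∈ morSubgroup R S u v hmem X}

instance : AddCommGroup (Mor R S u v hmem X hsum) :=
  inferInstanceAs (AddCommGroup (morSubgroup R S u v hmem X))

lemma mor_prop (w : Mor R S u v hmem X hsum) (j : Fin p) :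
    w.1 j = ∑ k, coef R S u v hmem 1 j k • w.1 k := w.2 j

def smulFun (s : S) (w : Fin p → X) : Fin p → X :=
  fun j => ∑ k, coef R S u v hmem s j k • w k

include hsum in
lemma smulFun_mem (s : S) (w : Fin p → X) :
    smulFun R S u v hmem X s w ∈ morSubgroup R S u v hmem X := by
  intro j
  show _ = ∑ k, coef R S u v hmem 1 j k • ∑ l, coef R S u v hmem s k l • w l
  calc smulFun R S u v hmem X s w j
      = ∑ l, coef R S u v hmem (1 * s) j l • w l := by
        rw [one_mul]; rfl
    _ = ∑ l, (∑ k, coef R S u v hmem 1 j k * coef R S u v hmem s k l) • w l := by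
        simp only [coef_key R S u v hmem hsum]
    _ = ∑ k, coef R S u v hmem 1 j k • ∑ l, coef R S u v hmem s k l • w l := by
        simp only [Finset.sum_smul, Finset.smul_sum, mul_smul]
        exact Finset.sum_comm

instance morSMul : SMul S (Mor R S u v hmem X hsum) :=
  ⟨fun s w => ⟨smulFun R S u v hmem X s w.1, smulFun_mem R S u v hmem hsum X s w.1⟩⟩

lemma smul_coe (s : S) (w : Mor R S u v hmem X hsum) (j : Fin p) :
    (s • w : Mor R S u v hmem X hsum).1 j = ∑ k, coef R S u v hmem s j k • w.1 k := rfl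

instance morModule : Module S (Mor R S u v hmem X hsum) where
  one_smul w := Subtype.ext (funext fun j => (w.2 j).symm)
  mul_smul s t w := by
    apply Subtype.ext; funext j
    calc ((s * t) • w : Mor R S u v hmem X hsum).1 j
        = ∑ l, coef R S u v hmem (s * t) j l • w.1 l := rfl
      _ = ∑ l, (∑ k, coef R S u v hmem s j k * coef R S u v hmem t k l) • w.1 l := by
          simp only [coef_key R S u v hmem hsum]
      _ = ∑ k, coef R S u v hmem s j k • ∑ l, coef R S u v hmem t k l • w.1 l := by
          simp only [Finset.sum_smul, Finset.smul_sum, mul_smul]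
          exact Finset.sum_comm
      _ = (s • t • w : Mor R S u v hmem X hsum).1 j := rfl
  smul_add s w₁ w₂ := by
    apply Subtype.ext; funext j
    show ∑ k, _ • (w₁.1 k + w₂.1 k) = _
    simp only [smul_add, Finset.sum_add_distrib]
    rfl
  smul_zero s := by
    apply Subtype.ext; funext j
    show ∑ k, coef R S u v hmem s j k • (0 : X) = (0 : Fin p → X) j
    simp
  add_smul s t w := by
    apply Subtype.ext; funext j
    show ∑ k, coef R S u v hmem (s + t) j k • w.1 k = _
    simp only [coef_add, add_smul, Finset.sum_add_distrib]
    rfl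
  zero_smul w := by
    apply Subtype.ext; funext j
    show ∑ k, coef R S u v hmem 0 j k • w.1 k = _
    simp only [coef_zero, zero_smul, Finset.sum_const_zero]
    rfl
lemma mor_coe_sum {ι : Type*} (t : Finset ι) (f : ι → Mor R S u v hmem X hsum) (j : Fin p) :
    (∑ i ∈ t, f i).1 j = ∑ i ∈ t, (f i).1 j :=
  map_sum (⟨⟨fun w => w.1 j, rfl⟩, fun _ _ => rfl⟩ :
    Mor R S u v hmem X hsum →+ X) f t

include hsum in
lemma sum_contract (x y : B) : ∑ k, (x * v k) * (u k * y) = x * y := by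
  calc ∑ k, (x * v k) * (u k * y) = ∑ k, x * ((v k * u k) * y) := by
        simp only [mul_assoc]
    _ = x * ((∑ k, v k * u k) * y) := by rw [← Finset.mul_sum, Finset.sum_mul]
    _ = x * y := by rw [hsum, one_mul]

end Core

section Funct
variable (R S : Subring B) {p : ℕ} (u v : Fin p → B)
variable (hmem : ∀ (s : S) (j k : Fin p), u j * (s : B) * v k ∈ R)
variable (hsum : ∑ k, v k * u k = 1)

/-- The linear map between image modules induced by an `R`-linear map. -/
def morMap {X Y : Type u} [AddCommGroup X] [Module R X] [AddCommGroup Y] [Module R Y]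
    (f : X →ₗ[R] Y) :
    Mor R S u v hmem X hsum →ₗ[S] Mor R S u v hmem Y hsum where
  toFun w := ⟨fun j => f (w.1 j), by
    intro j
    simp only
    conv_lhs => rw [w.2 j]
    simp [map_sum, map_smul]⟩
  map_add' w₁ w₂ := by
    apply Subtype.ext; funext j
    show f ((w₁ + w₂).1 j) = f (w₁.1 j) + f (w₂.1 j)
    rw [show (w₁ + w₂).1 = w₁.1 + w₂.1 from rfl]
    simp
  map_smul' s w := by
    apply Subtype.ext; funext j
    show f ((s • w).1 j) = _
    rw [smul_coe]
    simp only [map_sum, map_smul]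
    rfl

/-- The functor between module categories. -/
def Phi : ModuleCat.{u} R ⥤ ModuleCat.{u} S where
  obj X := ModuleCat.of S (Mor R S u v hmem X hsum)
  map f := ModuleCat.ofHom (morMap R S u v hmem hsum f.hom)
  map_id X := by
    apply ModuleCat.hom_ext; apply LinearMap.ext; intro w
    apply Subtype.ext; funext j
    rfl
  map_comp f g := by
    apply ModuleCat.hom_ext; apply LinearMap.ext; intro w
    apply Subtype.ext; funext j
    rfl

end Funct
section Unit

variable (R S : Subring B)
variable {m : ℕ} (c d : Fin m → B)
variable (hm1 : ∀ (s : S) (j k : Fin m), c j * (s : B) * d k ∈ R)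
variable (hs1 : ∑ k, d k * c k = 1)
variable {n : ℕ} (b a : Fin n → B)
variable (hm2 : ∀ (r : R) (i k : Fin n), b i * (r : B) * a k ∈ S)
variable (hs2 : ∑ k, a k * b k = 1)
variable (hcb : ∀ (j : Fin m) (i : Fin n), c j * b i ∈ R)
variable (had : ∀ (i : Fin n) (j : Fin m), a i * d j ∈ R)

variable (X : Type u) [AddCommGroup X] [Module R X]

/-- The row of the unit map. -/
def etaRow (x : X) (i : Fin n) : Mor R S c d hm1 X hs1 :=
  ⟨fun j => (⟨c j * b i, hcb j i⟩ : R) • x, by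
    intro j
    simp only [smul_smul, ← Finset.sum_smul]
    congr 1
    apply Subtype.ext
    push_cast [coef]
    simp only [mul_one]
    exact (sum_contract c d hs1 (c j) (b i)).symm⟩

include hs2 in
lemma etaRow_mem (x : X) :
    (etaRow R S c d hm1 hs1 b hcb X x) ∈
      morSubgroup S R b a hm2 (Mor R S c d hm1 X hs1) := by
  intro i
  apply Subtype.ext
  funext j
  rw [mor_coe_sum]
  simp only [smul_coe]
  have hrow : ∀ (k : Fin n) (l : Fin m),
      (etaRow R S c d hm1 hs1 b hcb X x k).1 l = (⟨c l * b k, hcb l k⟩ : R) • x :=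
    fun _ _ => rfl
  simp only [hrow]
  show (⟨c j * b i, hcb j i⟩ : R) • x = _
  simp only [smul_smul, ← Finset.sum_smul]
  congr 1
  apply Subtype.ext
  push_cast [coef]
  simp only [mul_one]
  symm
  calc ∑ k, ∑ l, (c j * (b i * a k) * d l) * (c l * b k)
      = ∑ k, c j * (b i * a k) * b k := by
        refine Finset.sum_congr rfl fun k _ => ?_
        exact sum_contract c d hs1 (c j * (b i * a k)) (b k)
    _ = ∑ k, ((c j * b i) * a k) * (b k * 1) := by simp [mul_assoc]
    _ = (c j * b i) * 1 := sum_contract b a hs2 _ _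
    _ = c j * b i := mul_one _

/-- The unit linear map. -/
def etaLin : X →ₗ[R] Mor S R b a hm2 (Mor R S c d hm1 X hs1) hs2 where
  toFun x := ⟨etaRow R S c d hm1 hs1 b hcb X x,
    etaRow_mem R S c d hm1 hs1 b a hm2 hs2 hcb X x⟩
  map_add' x y := by
    apply Subtype.ext; funext i
    apply Subtype.ext; funext j
    show (⟨c j * b i, hcb j i⟩ : R) • (x + y) = _
    rw [smul_add]
    rfl
  map_smul' r x := by
    apply Subtype.ext; funext i
    apply Subtype.ext; funext j
    rw [RingHom.id_apply]
    erw [smul_coe, mor_coe_sum]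
    simp only [smul_coe]
    have hrow : ∀ (k : Fin n) (l : Fin m),
        (etaRow R S c d hm1 hs1 b hcb X x k).1 l = (⟨c l * b k, hcb l k⟩ : R) • x :=
      fun _ _ => rfl
    simp only [hrow]
    show (⟨c j * b i, hcb j i⟩ : R) • (r • x) = _
    simp only [smul_smul, ← Finset.sum_smul]
    congr 1
    apply Subtype.ext
    push_cast [coef]
    symm
    calc ∑ k, ∑ l, (c j * (b i * (r : B) * a k) * d l) * (c l * b k)
        = ∑ k, c j * (b i * (r : B) * a k) * b k := by
          refine Finset.sum_congr rfl fun k _ => ?_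
          exact sum_contract c d hs1 (c j * (b i * (r : B) * a k)) (b k)
      _ = ∑ k, ((c j * b i * (r : B)) * a k) * (b k * 1) := by simp [mul_assoc]
      _ = (c j * b i * (r : B)) * 1 := sum_contract b a hs2 _ _
      _ = (c j * b i) * (r : B) := by rw [mul_one]

/-- The inverse of the unit map. -/
def epsFun (w : Mor S R b a hm2 (Mor R S c d hm1 X hs1) hs2) : X :=
  ∑ i, ∑ j, (⟨a i * d j, had i j⟩ : R) • (w.1 i).1 j

lemma eps_eta (x : X) :
    epsFun R S c d hm1 hs1 b a hm2 hs2 had X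
      (etaLin R S c d hm1 hs1 b a hm2 hs2 hcb X x) = x := by
  unfold epsFun
  have hrow : ∀ (i : Fin n) (j : Fin m),
      (((etaLin R S c d hm1 hs1 b a hm2 hs2 hcb X x).1 i).1 j) =
        (⟨c j * b i, hcb j i⟩ : R) • x := fun _ _ => rfl
  simp only [hrow, smul_smul, ← Finset.sum_smul]
  have : (∑ i, ∑ j, (⟨a i * d j, had i j⟩ : R) * ⟨c j * b i, hcb j i⟩) = (1 : R) := by
    apply Subtype.ext
    push_cast
    calc ∑ i, ∑ j, (a i * d j) * (c j * b i)
        = ∑ i, a i * b i := by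
          refine Finset.sum_congr rfl fun i _ => ?_
          exact sum_contract c d hs1 (a i) (b i)
      _ = ∑ i, (1 * a i) * (b i * 1) := by simp
      _ = (1 : B) * 1 := sum_contract b a hs2 _ _
      _ = 1 := mul_one _
  rw [this, one_smul]

lemma eta_eps (w : Mor S R b a hm2 (Mor R S c d hm1 X hs1) hs2) :
    etaLin R S c d hm1 hs1 b a hm2 hs2 hcb X
      (epsFun R S c d hm1 hs1 b a hm2 hs2 had X w) = w := by
  apply Subtype.ext; funext i
  apply Subtype.ext; funext j
  show (⟨c j * b i, hcb j i⟩ : R) • (epsFun R S c d hm1 hs1 b a hm2 hs2 had X w) = _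
  have h2 : (w.1 i).1 j = ((∑ k, coef S R b a hm2 1 i k • w.1 k : Mor R S c d hm1 X hs1)).1 j :=
    congrArg (fun z => z.1 j) (w.2 i)
  rw [h2, mor_coe_sum]
  simp only [smul_coe]
  unfold epsFun
  simp only [Finset.smul_sum, smul_smul]
  refine Finset.sum_congr rfl fun k _ => Finset.sum_congr rfl fun l _ => ?_
  congr 1
  apply Subtype.ext
  push_cast [coef]
  simp only [mul_one, mul_assoc]

/-- The unit linear equivalence. -/
def etaEquiv : X ≃ₗ[R] Mor S R b a hm2 (Mor R S c d hm1 X hs1) hs2 :=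
  { etaLin R S c d hm1 hs1 b a hm2 hs2 hcb X with
    invFun := epsFun R S c d hm1 hs1 b a hm2 hs2 had X
    left_inv := eps_eta R S c d hm1 hs1 b a hm2 hs2 hcb had X
    right_inv := eta_eps R S c d hm1 hs1 b a hm2 hs2 hcb had X }

/-- The unit natural isomorphism. -/
def unitNatIso :
    𝟭 (ModuleCat.{u} R) ≅ Phi R S c d hm1 hs1 ⋙ Phi S R b a hm2 hs2 :=
  NatIso.ofComponents
    (fun X => (etaEquiv R S c d hm1 hs1 b a hm2 hs2 hcb had X).toModuleIso)
    (by
      intro X Y f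
      apply ModuleCat.hom_ext; apply LinearMap.ext
      intro x
      apply Subtype.ext; funext i
      apply Subtype.ext; funext j
      show (⟨c j * b i, hcb j i⟩ : R) • (f.hom x) = f.hom ((⟨c j * b i, hcb j i⟩ : R) • x)
      rw [map_smul])

end Unit

section Main

variable (R S : Subring B)
variable {m : ℕ} (c d : Fin m → B)
variable (hm1 : ∀ (s : S) (j k : Fin m), c j * (s : B) * d k ∈ R)
variable (hs1 : ∑ k, d k * c k = 1)
variable {n : ℕ} (b a : Fin n → B)
variable (hm2 : ∀ (r : R) (i k : Fin n), b i * (r : B) * a k ∈ S)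
variable (hs2 : ∑ k, a k * b k = 1)
variable (hcb : ∀ (j : Fin m) (i : Fin n), c j * b i ∈ R)
variable (had : ∀ (i : Fin n) (j : Fin m), a i * d j ∈ R)
variable (hbc : ∀ (j : Fin n) (i : Fin m), b j * c i ∈ S)
variable (hda : ∀ (i : Fin m) (j : Fin n), d i * a j ∈ S)

/-- The Morita equivalence built from a two-sided direct-summand diagram. -/
def mainEquiv : ModuleCat.{u} R ≌ ModuleCat.{u} S :=
  CategoryTheory.Equivalence.mk (Phi R S c d hm1 hs1) (Phi S R b a hm2 hs2)
    (unitNatIso R S c d hm1 hs1 b a hm2 hs2 hcb had)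
    (unitNatIso S R b a hm2 hs2 c d hm1 hs1 hbc hda).symm

end Main

lemma isIntertwiner_mul {A B : Type*} [Ring A] [Ring B] {α β γ : A →+* B} {t s : B}
    (ht : IsIntertwiner β γ t) (hs : IsIntertwiner α β s) : IsIntertwiner α γ (t * s) :=
  fun x => by rw [mul_assoc, hs x, ← mul_assoc, ht x, mul_assoc]


end Stmt6Proof


/-- If `ρ ≤ σ` and `σ ≤ ρ` then the intertwiner endomorphism rings `R = Hom(ρ,ρ)` and
`S = Hom(σ,σ)` are Morita equivalent: their categories of left modules are equivalent. -/
theorem stmt_6 {A : Type v} {B : Type u} [Ring A] [Ring B] (ρ σ : A →+* B)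
    (h₁ : RingHomLE ρ σ) (h₂ : RingHomLE σ ρ) :
    Nonempty (ModuleCat.{u} (EndSubring ρ) ≌ ModuleCat.{u} (EndSubring σ)) := by
  obtain ⟨n, b, a, hb, ha, hsum2⟩ := h₁
  obtain ⟨m, c, d, hc, hd, hsum1⟩ := h₂
  refine ⟨Stmt6Proof.mainEquiv (EndSubring ρ) (EndSubring σ) c d ?_ hsum1 b a ?_ hsum2 ?_ ?_ ?_ ?_⟩
  · intro s j k
    exact Stmt6Proof.isIntertwiner_mul (Stmt6Proof.isIntertwiner_mul (hc j) s.2) (hd k)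
  · intro r i k
    exact Stmt6Proof.isIntertwiner_mul (Stmt6Proof.isIntertwiner_mul (hb i) r.2) (ha k)
  · intro j i
    exact Stmt6Proof.isIntertwiner_mul (hc j) (hb i)
  · intro i j
    exact Stmt6Proof.isIntertwiner_mul (ha i) (hd j)
  · intro j i
    exact Stmt6Proof.isIntertwiner_mul (hb j) (hc i)
  · intro i j
    exact Stmt6Proof.isIntertwiner_mul (hd i) (ha j)
end

section
/- Let (m, e) : λ ⊣ ρ be an adjunction in the 2-category of rings, with λ : A → B and ρ : B → A. Set γ = λ∘ρ and d = λ(m). Then (γ, d, e) is a comonoid in the endomorphism category of B, and the Kleisli comparison map κ : B_γ → A, b ↦ ρ(b)·m, is a ring isomorphism with inverse a ↦ e·λ(a), satisfying κ(b·e) = ρ(b) for all b ∈ B. -/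
/-- `(m, e) : l ⊣ r` is an adjunction in the 2-category of rings. -/
def IsRingAdjunction {A B : Type*} [Ring A] [Ring B]
    (l : A →+* B) (r : B →+* A) (m : A) (e : B) : Prop :=
  (∀ b : B, e * l (r b) = b * e) ∧ (∀ a : A, m * a = r (l a) * m) ∧
    r e * m = 1 ∧ e * l m = 1

/-- `(γ, d, e)` is a comonoid in the endomorphism category of the ring `B`. -/
def IsComonoid {B : Type*} [Ring B] (γ : B →+* B) (d e : B) : Prop :=
  (∀ b : B, d * γ b = γ (γ b) * d) ∧ (∀ b : B, e * γ b = b * e) ∧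
    γ d * d = d * d ∧ e * d = 1 ∧ γ e * d = 1

/-- The Kleisli multiplication `b₁ ⋆ b₂ = b₁·γ(b₂)·d` on `B`. -/
def kstar {B : Type*} [Ring B] (γ : B →+* B) (d b₁ b₂ : B) : B := b₁ * γ b₂ * d

/-- Given an adjunction `(m,e) : λ ⊣ ρ` in the 2-category of rings, `γ = λ∘ρ` with
`d = λ(m)` and counit `e` is a comonoid in the endomorphism category of `B`, and the
Kleisli comparison map `κ : B_γ → A`, `b ↦ ρ(b)·m`, is a ring isomorphism (from the
Kleisli ring `(B, ⋆, e)` to `A`) with inverse `a ↦ e·λ(a)`, satisfying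
`κ(ρ_γ(b)) = κ(b·e) = ρ(b)`. -/
theorem stmt_11 {A B : Type*} [Ring A] [Ring B]
    (l : A →+* B) (r : B →+* A) (m : A) (e : B) (h : IsRingAdjunction l r m e) :
    IsComonoid (l.comp r) (l m) e ∧
    -- κ is multiplicative from the Kleisli ring and preserves the unit `e`
    (∀ b₁ b₂ : B, r (kstar (l.comp r) (l m) b₁ b₂) * m = (r b₁ * m) * (r b₂ * m)) ∧
    (r e * m = 1) ∧
    -- κ is additive
    (∀ b₁ b₂ : B, r (b₁ + b₂) * m = r b₁ * m + r b₂ * m) ∧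
    -- κ is bijective with inverse `a ↦ e·λ(a)`
    (∀ a : A, r (e * l a) * m = a) ∧
    (∀ b : B, e * l (r b * m) = b) ∧
    -- κ compares the Kleisli extension `ρ_γ : b ↦ b·e` with `ρ`
    (∀ b : B, r (b * e) * m = r b) := by
  obtain ⟨he, hm, h1, h2⟩ := h
  refine ⟨⟨?_, he, ?_, h2, ?_⟩, ?_, h1, ?_, ?_, ?_, ?_⟩
  · intro b
    have := congrArg l (hm (r b))
    simpa [mul_assoc] using this
  · have := congrArg l (hm m)
    simpa [mul_assoc] using this.symm
  · have := congrArg l h1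
    simpa using this
  · intro b₁ b₂
    simp only [kstar, RingHom.comp_apply, map_mul]
    rw [mul_assoc, mul_assoc, mul_assoc, ← hm m, ← mul_assoc m (r b₂) m, hm (r b₂), mul_assoc]
  · intro b₁ b₂; rw [map_add, add_mul]
  · intro a
    rw [map_mul, mul_assoc, ← hm a, ← mul_assoc, h1, one_mul]
  · intro b
    rw [map_mul, ← mul_assoc, he, mul_assoc, h2, mul_one]
  · intro b
    rw [map_mul, mul_assoc, h1, mul_one]
end

section
/- If (m, e) : λ ⊣ ρ is an adjunction in the 2-category of rings, with λ : A → B and ρ : B → A, then both λ and ρ are injective. Consequently, if (γ, d, e) is a comonoid in the endomorphism category of a ring B, then the ring endomorphism γ is injective. -/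
universe u

/-- If `(m, e) : λ ⊣ ρ` is an adjunction in the 2-category of rings then both `λ` and
`ρ` are injective; consequently, for any comonoid `(γ, d, e)` in the endomorphism
category of a ring `B`, the endomorphism `γ` is injective. -/
theorem stmt_14 :
    (∀ (A B : Type u) [Ring A] [Ring B] (l : A →+* B) (r : B →+* A) (m : A) (e : B),
      IsRingAdjunction l r m e → Function.Injective l ∧ Function.Injective r) ∧
    (∀ (B : Type u) [Ring B] (γ : B →+* B) (d e : B),
      IsComonoid γ d e → Function.Injective γ) := by
  constructor
  · intro A B _ _ l r m e ⟨h1, h2, h3, h4⟩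
    constructor
    · intro a a' h
      have key : ∀ x : A, x = r e * r (l x) * m := by
        intro x
        calc x = (r e * m) * x := by rw [h3, one_mul]
        _ = r e * (m * x) := by rw [mul_assoc]
        _ = r e * (r (l x) * m) := by rw [h2]
        _ = r e * r (l x) * m := by rw [mul_assoc]
      rw [key a, key a', h]
    · intro b b' h
      have key : ∀ x : B, x = e * l (r x) * l m := by
        intro x
        calc x = x * (e * l m) := by rw [h4, mul_one]
        _ = (x * e) * l m := by rw [mul_assoc]
        _ = e * l (r x) * l m := by rw [h1]
      rw [key b, key b', h]
  · intro B _ γ d e ⟨h1, h2, h3, h4, h5⟩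
    intro b b' h
    have key : ∀ x : B, x = e * γ x * d := by
      intro x
      calc x = x * (e * d) := by rw [h4, mul_one]
      _ = (x * e) * d := by rw [mul_assoc]
      _ = e * γ x * d := by rw [h2]
    rw [key b, key b', h]
end
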